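/- arXiv:0802.2322 — 2 statements merged into one kernel-verified Lean document; each statement's English description precedes it below -/
import Mathlib

section
/- Suppose f is a Legendre function on ℝ^J, y ∈ U = int dom f, x is a farthest point of y in C, λ ≥ 1, and z := ∇f*(λ∇f(y) + (1−λ)∇f(x)) ∈ U. Then x is a farthest point of z in C. -/
open scoped RealInnerProductSpace
open Filter Set Topology

lemma grad_ineq {J : ℕ} {f : EuclideanSpace ℝ (Fin J) → ℝ} {U : Set (EuclideanSpace ℝ (Fin J))}
    (hconv : ConvexOn ℝ U f) {x c g : EuclideanSpace ℝ (Fin J)}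
    (hdf : HasGradientAt f g x) (hx : x ∈ U) (hc : c ∈ U) :
    f x + ⟪g, c - x⟫ ≤ f c := by
  set φ : ℝ → ℝ := fun t => f (x + t • (c - x)) with hφ
  have hcurve : HasDerivAt (fun t : ℝ => x + t • (c - x)) (c - x) 0 := by
    simpa using ((hasDerivAt_id (0:ℝ)).smul_const (c - x)).const_add x
  have hd : HasDerivAt φ ⟪g, c - x⟫ 0 := by
    have hx0 : x + (0:ℝ) • (c - x) = x := by simp
    have h := HasFDerivAt.comp_hasDerivAt 0 (hx0 ▸ hdf.hasFDerivAt) hcurve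
    exact h
  have hslope : Tendsto (slope φ 0) (𝓝[>] 0) (𝓝 ⟪g, c - x⟫) :=
    (hasDerivAt_iff_tendsto_slope.mp hd).mono_left
      (nhdsWithin_mono 0 (fun t ht => ne_of_gt ht))
  have hbound : ∀ᶠ t in 𝓝[>] (0:ℝ), slope φ 0 t ≤ f c - f x := by
    filter_upwards [Ioo_mem_nhdsGT_of_mem (by norm_num : (0:ℝ) ∈ Ico 0 1)] with t ht
    have hcomb : f ((1 - t) • x + t • c) ≤ (1 - t) * f x + t * f c :=
      hconv.2 hx hc (by linarith [ht.2]) (le_of_lt ht.1) (by ring)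
    have heq : x + t • (c - x) = (1 - t) • x + t • c := by
      simp [smul_sub, sub_smul]; abel
    rw [slope_def_field, hφ]
    simp only [heq, zero_smul, add_zero, sub_zero]
    rw [div_le_iff₀ ht.1]
    nlinarith [hcomb]
  have : ⟪g, c - x⟫ ≤ f c - f x := by
    have : φ 0 = f x := by simp [hφ]
    exact le_of_tendsto hslope hbound
  linarith


/-- Bregman distance for real-valued `f` with gradient `f'`. -/
noncomputable abbrev bregman {J : ℕ}
    (f : EuclideanSpace ℝ (Fin J) → ℝ) (f' : EuclideanSpace ℝ (Fin J) → EuclideanSpace ℝ (Fin J))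
    (x y : EuclideanSpace ℝ (Fin J)) : ℝ :=
  f x - f y - ⟪f' y, x - y⟫

/-- If `x` is a farthest point of `y` in `C` w.r.t. the left Bregman distance of a Legendre
function `f`, `λ ≥ 1`, and `z = ∇f*(λ∇f(y) + (1-λ)∇f(x)) ∈ U`, then `x` is a farthest
point of `z` in `C`. -/
theorem farthest_of_pushout {J : ℕ}
    (f : EuclideanSpace ℝ (Fin J) → ℝ) (U : Set (EuclideanSpace ℝ (Fin J)))
    (hU : IsOpen U) (hUne : U.Nonempty)
    (hconv : StrictConvexOn ℝ U f)
    (f' : EuclideanSpace ℝ (Fin J) → EuclideanSpace ℝ (Fin J))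
    (hf' : ∀ y ∈ U, HasGradientAt f (f' y) y)
    (hinj : ∀ a ∈ U, ∀ b ∈ U, f' a = f' b → a = b)
    (C : Set (EuclideanSpace ℝ (Fin J))) (hCne : C.Nonempty)
    (hCcp : IsCompact C) (hCU : C ⊆ U)
    (y : EuclideanSpace ℝ (Fin J)) (hy : y ∈ U)
    (x : EuclideanSpace ℝ (Fin J)) (hx : x ∈ C)
    (hfar : ∀ c ∈ C, bregman f f' c y ≤ bregman f f' x y)
    (lam : ℝ) (hlam : 1 ≤ lam)
    (z : EuclideanSpace ℝ (Fin J)) (hz : z ∈ U)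
    (hzgrad : f' z = lam • f' y + (1 - lam) • f' x) :
    ∀ c ∈ C, bregman f f' c z ≤ bregman f f' x z := by
  intro c hc
  have hgi := grad_ineq hconv.convexOn (hf' x (hCU hx)) (hCU hx) (hCU hc)
  have hfc := hfar c hc
  have hA : ⟪f' y, c - y⟫ - ⟪f' y, x - y⟫ = ⟪f' y, c - x⟫ := by
    rw [← inner_sub_right]; congr 1; abel
  have h1 : f c - f x - ⟪f' y, c - x⟫ ≤ 0 := by
    simp only [bregman] at hfc; linarith [hA]
  have h2 : 0 ≤ f c - f x - ⟪f' x, c - x⟫ := by linarith [hgi]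
  have key : f c - f x - ⟪f' z, c - x⟫ ≤ 0 := by
    rw [hzgrad, inner_add_left, real_inner_smul_left, real_inner_smul_left]
    nlinarith [mul_nonneg (by linarith : (0:ℝ) ≤ lam)
        (by linarith : 0 ≤ -(f c - f x - ⟪f' y, c - x⟫)),
      mul_nonneg (by linarith : (0:ℝ) ≤ lam - 1) h2]
  have hB : ⟪f' z, c - z⟫ - ⟪f' z, x - z⟫ = ⟪f' z, c - x⟫ := by
    rw [← inner_sub_right]; congr 1; abel
  simp only [bregman]
  linarith [key, hB]
end

section
/- If x_n → x in U, c_n ∈ C is a farthest point of x_n in C for each n, and c_n → c̄, then c̄ is a farthest point of x in C. Consequently the left Bregman farthest-point map is compact-valued and upper semicontinuous on U. -/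
open scoped RealInnerProductSpace

/-- The left Bregman farthest-point map `Q_C` of a compact set `C`. -/
def farthestSet {J : ℕ}
    (f : EuclideanSpace ℝ (Fin J) → ℝ) (f' : EuclideanSpace ℝ (Fin J) → EuclideanSpace ℝ (Fin J))
    (C : Set (EuclideanSpace ℝ (Fin J))) (y : EuclideanSpace ℝ (Fin J)) :
    Set (EuclideanSpace ℝ (Fin J)) :=
  {c ∈ C | ∀ d ∈ C, bregman f f' d y ≤ bregman f f' c y}

open Filter Topology

section Aux

variable {J : ℕ}

lemma hasDerivAt_line (f : EuclideanSpace ℝ (Fin J) → ℝ) {g y : EuclideanSpace ℝ (Fin J)}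
    (h : HasGradientAt f g y) (v : EuclideanSpace ℝ (Fin J)) :
    HasDerivAt (fun t : ℝ => f (y + t • v)) ⟪g, v⟫ 0 := by
  have hf := h.hasFDerivAt
  have hline : HasDerivAt (fun t : ℝ => y + t • v) v 0 := by
    simpa using ((hasDerivAt_id (0:ℝ)).smul_const v).const_add y
  have hf' : HasFDerivAt f (InnerProductSpace.toDual ℝ _ g) (y + (0:ℝ) • v) := by
    simpa using hf
  have hcomp := hf'.comp_hasDerivAt 0 hline
  simp [InnerProductSpace.toDual_apply_apply] at hcomp
  exact hcomp

lemma subgrad {f : EuclideanSpace ℝ (Fin J) → ℝ} {U : Set (EuclideanSpace ℝ (Fin J))}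
    (hconv : ConvexOn ℝ U f) {g y z : EuclideanSpace ℝ (Fin J)}
    (hy : y ∈ U) (hz : z ∈ U) (hg : HasGradientAt f g y) :
    f y + ⟪g, z - y⟫ ≤ f z := by
  have hline := hasDerivAt_line f hg (z - y)
  have hslope : ∀ t : ℝ, t ∈ Set.Ioo (0:ℝ) 1 →
      slope (fun t : ℝ => f (y + t • (z - y))) 0 t ≤ f z - f y := by
    intro t ht
    have h1 : y + t • (z - y) = (1 - t) • y + t • z := by
      simp [smul_sub, sub_smul]; abel
    have h2 := hconv.2 hy hz (by linarith [ht.2] : (0:ℝ) ≤ 1 - t) ht.1.le (by ring)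
    rw [← h1] at h2
    simp only [slope, vsub_eq_sub, sub_zero, smul_eq_mul]
    have h0 : y + (0:ℝ) • (z - y) = y := by simp
    simp only [smul_eq_mul] at h2
    rw [h0, inv_mul_le_iff₀ ht.1]
    nlinarith [h2]
  have htend : Tendsto (slope (fun t : ℝ => f (y + t • (z - y))) 0) (𝓝[>] (0:ℝ))
      (𝓝 ⟪g, z - y⟫) := by
    have := hasDerivAt_iff_tendsto_slope.1 hline
    exact this.mono_left (nhdsWithin_mono _ (fun t ht => ne_of_gt ht))
  have hle : ⟪g, z - y⟫ ≤ f z - f y := by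
    refine le_of_tendsto htend ?_
    filter_upwards [Ioo_mem_nhdsGT_of_mem (Set.left_mem_Ico.2 zero_lt_one)] with t ht
    exact hslope t ht
  linarith

lemma subgrad_unique {f : EuclideanSpace ℝ (Fin J) → ℝ} {U : Set (EuclideanSpace ℝ (Fin J))}
    (hU : IsOpen U) {g a x : EuclideanSpace ℝ (Fin J)} (hx : x ∈ U)
    (hg : HasGradientAt f g x) (ha : ∀ z ∈ U, f x + ⟪a, z - x⟫ ≤ f z) : a = g := by
  have key : ∀ v : EuclideanSpace ℝ (Fin J), ⟪a, v⟫ ≤ ⟪g, v⟫ := by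
    intro v
    have hline := hasDerivAt_line f hg v
    obtain ⟨ε, hε, hball⟩ := Metric.isOpen_iff.1 hU x hx
    set δ := ε / (‖v‖ + 1) with hδ
    have hδpos : 0 < δ := div_pos hε (by positivity)
    have htend : Tendsto (slope (fun t : ℝ => f (x + t • v)) 0) (𝓝[>] (0:ℝ))
        (𝓝 ⟪g, v⟫) :=
      (hasDerivAt_iff_tendsto_slope.1 hline).mono_left
        (nhdsWithin_mono _ (fun t ht => ne_of_gt ht))
    refine ge_of_tendsto htend ?_
    filter_upwards [Ioo_mem_nhdsGT_of_mem (Set.left_mem_Ico.2 hδpos)] with t ht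
    have hmem : x + t • v ∈ U := by
      apply hball
      simp only [Metric.mem_ball, dist_self_add_left, norm_smul, Real.norm_eq_abs,
        abs_of_pos ht.1]
      calc t * ‖v‖ ≤ t * (‖v‖ + 1) := by nlinarith [ht.1, norm_nonneg v]
        _ < δ * (‖v‖ + 1) := by nlinarith [ht.2, norm_nonneg v]
        _ = ε := by rw [hδ]; field_simp
    have h2 := ha _ hmem
    rw [add_sub_cancel_left, real_inner_smul_right] at h2
    simp only [slope, vsub_eq_sub, sub_zero, smul_eq_mul]
    have h0 : x + (0:ℝ) • v = x := by simp
    rw [h0, le_inv_mul_iff₀ ht.1]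
    nlinarith [h2]
  have h0 : ⟪a - g, a - g⟫ ≤ 0 := by
    rw [inner_sub_left]
    linarith [key (a - g)]
  have := le_antisymm h0 real_inner_self_nonneg
  rw [inner_self_eq_zero] at this
  exact sub_eq_zero.1 this

set_option maxHeartbeats 1000000 in
lemma grad_tendsto {f : EuclideanSpace ℝ (Fin J) → ℝ} {U : Set (EuclideanSpace ℝ (Fin J))}
    (hU : IsOpen U) (hconv : ConvexOn ℝ U f) {f' : EuclideanSpace ℝ (Fin J) → EuclideanSpace ℝ (Fin J)}
    (hf' : ∀ y ∈ U, HasGradientAt f (f' y) y)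
    {x : EuclideanSpace ℝ (Fin J)} (hx : x ∈ U) {xn : ℕ → EuclideanSpace ℝ (Fin J)}
    (hxnU : ∀ n, xn n ∈ U) (hxn : Tendsto xn atTop (𝓝 x)) :
    Tendsto (fun n => f' (xn n)) atTop (𝓝 (f' x)) := by
  have fcont : ∀ y ∈ U, ContinuousAt f y := fun y hy =>
    (hf' y hy).hasFDerivAt.differentiableAt.continuousAt
  obtain ⟨ε', hε', hball⟩ := Metric.isOpen_iff.1 hU x hx
  set ε := ε' / 2 with hεdef
  have hε : 0 < ε := by positivity
  have hsub : Metric.closedBall x ε ⊆ U := fun z hz =>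
    hball (lt_of_le_of_lt (Metric.mem_closedBall.1 hz) (by simpa [hεdef] using half_lt_self hε'))
  have hcpt : IsCompact (Metric.closedBall x ε) := isCompact_closedBall x ε
  obtain ⟨w, hw, hwmax⟩ := hcpt.exists_isMaxOn (Metric.nonempty_closedBall.2 hε.le)
    (fun z hz => (fcont z (hsub hz)).continuousWithinAt)
  set M := f w with hM
  have hMax : ∀ z ∈ Metric.closedBall x ε, f z ≤ M := fun z hz => hwmax hz
  have hfx : Tendsto (fun n => f (xn n)) atTop (𝓝 (f x)) := (fcont x hx).tendsto.comp hxn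
  have hMx : f x ≤ M := hMax x (Metric.mem_closedBall_self hε.le)
  set K := (M - f x + 1) * (2 / ε) with hK
  have hKpos : 0 < K := by
    have h1 : (0:ℝ) < M - f x + 1 := by linarith
    positivity
  have hbound : ∀ n, dist (xn n) x ≤ ε / 2 → f x - 1 < f (xn n) → ‖f' (xn n)‖ ≤ K := by
    intro n hn1 hn2
    set g := f' (xn n) with hg
    rcases eq_or_ne g 0 with h0 | h0
    · rw [h0]; simpa using hKpos.le
    · set u := (ε / 2) • ‖g‖⁻¹ • g with hu
      have hgn : (0:ℝ) < ‖g‖ := norm_pos_iff.2 h0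
      have hnu : ‖u‖ = ε / 2 := by
        rw [hu, norm_smul, norm_smul, norm_inv, norm_norm, Real.norm_eq_abs,
          abs_of_pos (by positivity : (0:ℝ) < ε/2)]
        field_simp
      have hdu : dist (xn n + u) (xn n) = ε / 2 := by
        rw [dist_self_add_left, hnu]
      have hz : xn n + u ∈ Metric.closedBall x ε := by
        rw [Metric.mem_closedBall]
        calc dist (xn n + u) x ≤ dist (xn n + u) (xn n) + dist (xn n) x := dist_triangle _ _ _
          _ ≤ ε := by rw [hdu]; linarith
      have hxnb : xn n ∈ U := hxnU n
      have hsg := subgrad hconv hxnb (hsub hz) (hf' (xn n) hxnb)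
      rw [add_sub_cancel_left] at hsg
      have hinner : ⟪g, u⟫ = (ε / 2) * ‖g‖ := by
        rw [hu, real_inner_smul_right, real_inner_smul_right, real_inner_self_eq_norm_sq]
        field_simp
      have hfz : f (xn n + u) ≤ M := hMax _ hz
      rw [hinner] at hsg
      rw [hK, mul_comm, div_mul_eq_mul_div, le_div_iff₀ hε]
      nlinarith [hsg, hfz, hn2]
  obtain ⟨N, hN⟩ : ∃ N, ∀ n ≥ N, ‖f' (xn n)‖ ≤ K := by
    have h1 : ∀ᶠ n in atTop, dist (xn n) x ≤ ε / 2 :=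
      (hxn.eventually (Metric.closedBall_mem_nhds x (by positivity))).mono
        (fun n hn => Metric.mem_closedBall.1 hn)
    have h2 : ∀ᶠ n in atTop, f x - 1 < f (xn n) :=
      hfx.eventually (eventually_gt_nhds (by linarith))
    obtain ⟨N, hN⟩ := (h1.and h2).exists_forall_of_atTop
    exact ⟨N, fun n hn => hbound n (hN n hn).1 (hN n hn).2⟩
  apply tendsto_of_subseq_tendsto
  intro ns hns
  obtain ⟨N2, hN2⟩ := (hns.eventually (eventually_ge_atTop N)).exists_forall_of_atTop
  have hmem : ∀ k : ℕ, f' (xn (ns (k + N2))) ∈ Metric.closedBall (0 : EuclideanSpace ℝ (Fin J)) K := by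
    intro k
    rw [Metric.mem_closedBall, dist_zero_right]
    exact hN _ (hN2 _ (Nat.le_add_left N2 k))
  obtain ⟨a, _, φ, hφ, hφtend⟩ :=
    (isCompact_closedBall (0 : EuclideanSpace ℝ (Fin J)) K).tendsto_subseq hmem
  have hmk : Tendsto (fun k => ns (φ k + N2)) atTop atTop :=
    hns.comp (tendsto_atTop_mono (fun k => Nat.le_add_right (φ k) N2) hφ.tendsto_atTop)
  have hxmk : Tendsto (fun k => xn (ns (φ k + N2))) atTop (𝓝 x) := hxn.comp hmk
  have hfmk : Tendsto (fun k => f (xn (ns (φ k + N2)))) atTop (𝓝 (f x)) :=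
    ((fcont x hx).tendsto).comp hxmk
  have ha : ∀ z ∈ U, f x + ⟪a, z - x⟫ ≤ f z := by
    intro z hz
    have hle : ∀ k, f (xn (ns (φ k + N2))) +
        ⟪f' (xn (ns (φ k + N2))), z - xn (ns (φ k + N2))⟫ ≤ f z := fun k =>
      subgrad hconv (hxnU _) hz (hf' _ (hxnU _))
    exact le_of_tendsto (hfmk.add (hφtend.inner (tendsto_const_nhds.sub hxmk)))
      (Filter.Eventually.of_forall hle)
  have haeq : a = f' x := subgrad_unique hU hx (hf' x hx) ha
  exact ⟨fun k => φ k + N2, haeq ▸ hφtend⟩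

end Aux

/-- Cluster points of farthest points of a convergent sequence are farthest points of the
limit; consequently `Q_C` is compact-valued and upper semicontinuous on `U`. -/
theorem farthest_point_map_closed_graph_and_usc {J : ℕ}
    (f : EuclideanSpace ℝ (Fin J) → ℝ) (U : Set (EuclideanSpace ℝ (Fin J)))
    (hU : IsOpen U) (hUne : U.Nonempty)
    (hconv : StrictConvexOn ℝ U f)
    (f' : EuclideanSpace ℝ (Fin J) → EuclideanSpace ℝ (Fin J))
    (hf' : ∀ y ∈ U, HasGradientAt f (f' y) y)
    (hcoer : Filter.Tendsto (fun x : EuclideanSpace ℝ (Fin J) => f x / ‖x‖)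
      (Filter.comap norm Filter.atTop) Filter.atTop)
    (C : Set (EuclideanSpace ℝ (Fin J))) (hCne : C.Nonempty)
    (hCcp : IsCompact C) (hCU : C ⊆ U) :
    (∀ (x : EuclideanSpace ℝ (Fin J)) (xn cn : ℕ → EuclideanSpace ℝ (Fin J))
        (cbar : EuclideanSpace ℝ (Fin J)), x ∈ U → (∀ n, xn n ∈ U) →
        Filter.Tendsto xn Filter.atTop (nhds x) →
        (∀ n, cn n ∈ farthestSet f f' C (xn n)) →
        Filter.Tendsto cn Filter.atTop (nhds cbar) →
        cbar ∈ farthestSet f f' C x) ∧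
      (∀ y ∈ U, IsCompact (farthestSet f f' C y)) ∧
      (∀ y ∈ U, ∀ V : Set (EuclideanSpace ℝ (Fin J)), IsOpen V →
        farthestSet f f' C y ⊆ V →
        ∃ δ > 0, ∀ z ∈ Metric.ball y δ ∩ U, farthestSet f f' C z ⊆ V) := by
  have fcont : ∀ y ∈ U, ContinuousAt f y := fun y hy =>
    (hf' y hy).hasFDerivAt.differentiableAt.continuousAt
  have key1 : ∀ (x : EuclideanSpace ℝ (Fin J)) (xn cn : ℕ → EuclideanSpace ℝ (Fin J))
      (cbar : EuclideanSpace ℝ (Fin J)), x ∈ U → (∀ n, xn n ∈ U) →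
      Tendsto xn atTop (𝓝 x) → (∀ n, cn n ∈ farthestSet f f' C (xn n)) →
      Tendsto cn atTop (𝓝 cbar) → cbar ∈ farthestSet f f' C x := by
    intro x xn cn cbar hx hxnU hxn hcn hcnlim
    have hcbarC : cbar ∈ C :=
      hCcp.isClosed.mem_of_tendsto hcnlim (Filter.Eventually.of_forall fun n => (hcn n).1)
    refine ⟨hcbarC, fun d hd => ?_⟩
    have hgrad := grad_tendsto hU hconv.convexOn hf' hx hxnU hxn
    have hfxn : Tendsto (fun n => f (xn n)) atTop (𝓝 (f x)) := (fcont x hx).tendsto.comp hxn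
    have hfcn : Tendsto (fun n => f (cn n)) atTop (𝓝 (f cbar)) :=
      (fcont cbar (hCU hcbarC)).tendsto.comp hcnlim
    have hL : Tendsto (fun n => bregman f f' d (xn n)) atTop (𝓝 (bregman f f' d x)) :=
      (tendsto_const_nhds.sub hfxn).sub (hgrad.inner (tendsto_const_nhds.sub hxn))
    have hR : Tendsto (fun n => bregman f f' (cn n) (xn n)) atTop
        (𝓝 (bregman f f' cbar x)) :=
      (hfcn.sub hfxn).sub (hgrad.inner (hcnlim.sub hxn))
    exact le_of_tendsto_of_tendsto' hL hR (fun n => (hcn n).2 d hd)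
  refine ⟨key1, ?_, ?_⟩
  · intro y hy
    have hclosed : IsClosed (farthestSet f f' C y) := by
      apply IsSeqClosed.isClosed
      intro c p hc hcp
      exact key1 y (fun _ => y) c p hy (fun _ => hy) tendsto_const_nhds hc hcp
    exact hCcp.of_isClosed_subset hclosed (fun c hc => hc.1)
  · intro y hy V hV hVsub
    by_contra h
    push_neg at h
    have h' : ∀ k : ℕ, ∃ z, (z ∈ Metric.ball y (1 / (k + 1)) ∩ U) ∧
        ∃ c, c ∈ farthestSet f f' C z ∧ c ∉ V := by
      intro k
      obtain ⟨z, hz, hns⟩ := h (1 / (k + 1)) (by positivity)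
      obtain ⟨c, hc, hcV⟩ := Set.not_subset.1 hns
      exact ⟨z, hz, c, hc, hcV⟩
    choose z hz c hc hcV using h'
    have hzy : Tendsto z atTop (𝓝 y) := by
      rw [tendsto_iff_dist_tendsto_zero]
      refine squeeze_zero (fun _ => dist_nonneg) (fun k => ?_) tendsto_one_div_add_atTop_nhds_zero_nat
      exact (Metric.mem_ball.1 (hz k).1).le
    obtain ⟨cbar, hcbarC, φ, hφ, hφtend⟩ := hCcp.tendsto_subseq (fun k => (hc k).1)
    have hmem : cbar ∈ farthestSet f f' C y :=
      key1 y (z ∘ φ) (c ∘ φ) cbar hy (fun k => (hz (φ k)).2)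
        (hzy.comp hφ.tendsto_atTop) (fun k => hc (φ k)) hφtend
    have : cbar ∉ V := by
      have : cbar ∈ Vᶜ := hV.isClosed_compl.mem_of_tendsto hφtend
        (Filter.Eventually.of_forall fun k => hcV (φ k))
      exact this
    exact this (hVsub hmem)
end
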